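/- Let X ⊆ ℝ^n and Y ⊆ ℝ^m be closed cones with vertex at the origin, i.e. closed sets such that t·x ∈ X for all t ≥ 0 and x ∈ X, and likewise for Y. If there exist ε, δ > 0 and a bijection φ : {x ∈ X : ‖x‖ ≤ ε} → {y ∈ Y : ‖y‖ ≤ δ} with φ(0) = 0 such that φ and φ⁻¹ are Lipschitz for the Euclidean distance, then there exists a bijection Φ : X → Y such that Φ and Φ⁻¹ are Lipschitz for the Euclidean distance. (Cones that are outer bi-Lipschitz homeomorphic as germs at their vertices are globally outer bi-Lipschitz homeomorphic.) -/

import Mathlib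

open Filter Topology MvPolynomial

/-- The tangent cone at infinity of a subset `A` of a normed space: `v` is a tangent
vector at infinity if there are points `x i ∈ A` with `‖x i‖ → ∞` and positive reals
`t i` with `x i / t i → v`. -/
def TangentConeAtInfty {E : Type*} [NormedAddCommGroup E] [NormedSpace ℝ E]
    (A : Set E) : Set E :=
  {v | ∃ (x : ℕ → E) (t : ℕ → ℝ), (∀ i, x i ∈ A) ∧ (∀ i, 0 < t i) ∧
    Tendsto (fun i => ‖x i‖) atTop atTop ∧
    Tendsto (fun i => (t i)⁻¹ • x i) atTop (𝓝 v)}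

/-- `X` and `Y` are outer bi-Lipschitz homeomorphic at infinity: there are compact sets
`K`, `K'` and a bijection `φ : X \ K → Y \ K'` which is Lipschitz with Lipschitz inverse,
with respect to the Euclidean (outer) distance. -/
def OuterBiLipAtInfty {E F : Type*} [NormedAddCommGroup E] [NormedAddCommGroup F]
    (X : Set E) (Y : Set F) : Prop :=
  ∃ (K : Set E) (K' : Set F) (φ : E → F),
    IsCompact K ∧ IsCompact K' ∧ Set.BijOn φ (X \ K) (Y \ K') ∧
    (∃ C > (0:ℝ), ∀ a ∈ X \ K, ∀ b ∈ X \ K, dist (φ a) (φ b) ≤ C * dist a b) ∧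
    (∃ c > (0:ℝ), ∀ a ∈ X \ K, ∀ b ∈ X \ K, dist a b ≤ c * dist (φ a) (φ b))

/-- The germs `(X,0)` and `(Y,0)` are outer bi-Lipschitz homeomorphic: there are
`ε, δ > 0` and a bijection `φ : X ∩ B̄_ε(0) → Y ∩ B̄_δ(0)` with `φ 0 = 0` which is
Lipschitz with Lipschitz inverse for the Euclidean (outer) distance. -/
def OuterBiLipGerm {E F : Type*} [NormedAddCommGroup E] [NormedAddCommGroup F]
    (X : Set E) (Y : Set F) : Prop :=
  ∃ ε > (0:ℝ), ∃ δ > (0:ℝ), ∃ φ : E → F,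
    Set.BijOn φ (X ∩ Metric.closedBall 0 ε) (Y ∩ Metric.closedBall 0 δ) ∧ φ 0 = 0 ∧
    (∃ C > (0:ℝ), ∀ a ∈ X ∩ Metric.closedBall 0 ε, ∀ b ∈ X ∩ Metric.closedBall 0 ε,
      dist (φ a) (φ b) ≤ C * dist a b) ∧
    (∃ c > (0:ℝ), ∀ a ∈ X ∩ Metric.closedBall 0 ε, ∀ b ∈ X ∩ Metric.closedBall 0 ε,
      dist a b ≤ c * dist (φ a) (φ b))

/-- The zero set in `ℂⁿ` (with the Euclidean norm) of a polynomial. -/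
noncomputable def mvZeroSet {n : ℕ} (f : MvPolynomial (Fin n) ℂ) :
    Set (EuclideanSpace ℂ (Fin n)) :=
  {x | MvPolynomial.eval (x : Fin n → ℂ) f = 0}

private lemma ultra_lim_exists {G : Type*} [NormedAddCommGroup G] [ProperSpace G]
    (U : Ultrafilter ℕ) (hU : (U : Filter ℕ) ≤ atTop) (g : ℕ → G) (R : ℝ)
    (hg : ∀ᶠ k in atTop, ‖g k‖ ≤ R) :
    ∃ L, Tendsto g (U : Filter ℕ) (𝓝 L) := by
  have hK : Metric.closedBall (0:G) R ∈ Filter.map g (U : Filter ℕ) := by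
    have : ∀ᶠ k in (U : Filter ℕ), g k ∈ Metric.closedBall (0:G) R := by
      filter_upwards [hU hg] with k hk
      simpa [Metric.mem_closedBall, dist_zero_right] using hk
    exact this
  obtain ⟨L, -, hL⟩ := (isCompact_closedBall (0:G) R).ultrafilter_le_nhds (U.map g)
    (le_principal_iff.2 (by simpa [Ultrafilter.coe_map] using hK))
  exact ⟨L, by simpa [Tendsto, Ultrafilter.coe_map] using hL⟩

/-- closed cones (with vertex at the origin) that are outer bi-Lipschitz
homeomorphic as germs at their vertices are globally outer bi-Lipschitz homeomorphic. -/
theorem cones_biLipschitz_germ_implies_global {n m : ℕ}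
    (X : Set (EuclideanSpace ℝ (Fin n))) (Y : Set (EuclideanSpace ℝ (Fin m)))
    (hXclosed : IsClosed X) (hYclosed : IsClosed Y)
    (hXcone : ∀ t : ℝ, 0 ≤ t → ∀ x ∈ X, t • x ∈ X)
    (hYcone : ∀ t : ℝ, 0 ≤ t → ∀ y ∈ Y, t • y ∈ Y)
    (ε δ : ℝ) (hε : 0 < ε) (hδ : 0 < δ)
    (φ : EuclideanSpace ℝ (Fin n) → EuclideanSpace ℝ (Fin m))
    (hbij : Set.BijOn φ {x ∈ X | ‖x‖ ≤ ε} {y ∈ Y | ‖y‖ ≤ δ})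
    (hφ0 : φ 0 = 0)
    (hlip : ∃ C > (0:ℝ), ∀ a ∈ {x ∈ X | ‖x‖ ≤ ε}, ∀ b ∈ {x ∈ X | ‖x‖ ≤ ε},
      dist (φ a) (φ b) ≤ C * dist a b)
    (hlipinv : ∃ c > (0:ℝ), ∀ a ∈ {x ∈ X | ‖x‖ ≤ ε}, ∀ b ∈ {x ∈ X | ‖x‖ ≤ ε},
      dist a b ≤ c * dist (φ a) (φ b)) :
    ∃ Φ : EuclideanSpace ℝ (Fin n) → EuclideanSpace ℝ (Fin m),
      Set.BijOn Φ X Y ∧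
      (∃ C > (0:ℝ), ∀ a ∈ X, ∀ b ∈ X, dist (Φ a) (Φ b) ≤ C * dist a b) ∧
      (∃ c > (0:ℝ), ∀ a ∈ X, ∀ b ∈ X, dist a b ≤ c * dist (Φ a) (Φ b)) := by
  classical
  rcases X.eq_empty_or_nonempty with hXe | ⟨x0, hx0⟩
  · -- X empty forces Y empty
    have hYe : Y = ∅ := by
      rw [Set.eq_empty_iff_forall_notMem]
      intro y hy
      have h0Y : (0 : EuclideanSpace ℝ (Fin m)) ∈ Y := by
        simpa using hYcone 0 le_rfl y hy
      obtain ⟨x, hx, -⟩ := hbij.surjOn ⟨h0Y, by simpa using hδ.le⟩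
      rw [hXe] at hx
      exact hx.1
    subst hXe; subst hYe
    refine ⟨fun _ => 0, ⟨?_, ?_, ?_⟩, ⟨1, one_pos, ?_⟩, ⟨1, one_pos, ?_⟩⟩
    · intro x hx; exact absurd hx (Set.notMem_empty x)
    · intro a ha; exact absurd ha (Set.notMem_empty a)
    · exact Set.surjOn_empty _ _
    · intro a ha; exact absurd ha (Set.notMem_empty a)
    · intro a ha; exact absurd ha (Set.notMem_empty a)
  obtain ⟨C, hC, hlip⟩ := hlip
  obtain ⟨c, hc, hlipinv⟩ := hlipinv
  have h0X : (0 : EuclideanSpace ℝ (Fin n)) ∈ X := by simpa using hXcone 0 le_rfl x0 hx0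
  have h0S : (0 : EuclideanSpace ℝ (Fin n)) ∈ {x ∈ X | ‖x‖ ≤ ε} := ⟨h0X, by simpa using hε.le⟩
  set t : ℕ → ℝ := fun k => (k : ℝ) + 1 with ht_def
  have ht : ∀ k, 0 < t k := fun k => by positivity
  have htne : ∀ k, t k ≠ 0 := fun k => (ht k).ne'
  have htop : Tendsto t atTop atTop :=
    tendsto_atTop_add_const_right _ 1 tendsto_natCast_atTop_atTop
  set φk : ℕ → EuclideanSpace ℝ (Fin n) → EuclideanSpace ℝ (Fin m) :=
    fun k x => t k • φ ((t k)⁻¹ • x) with hφk_def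
  have hmem : ∀ k, ∀ x ∈ X, ‖x‖ ≤ t k * ε → (t k)⁻¹ • x ∈ {x ∈ X | ‖x‖ ≤ ε} := by
    intro k x hx hxn
    refine ⟨hXcone _ (by positivity) x hx, ?_⟩
    rw [norm_smul, norm_inv, Real.norm_eq_abs, abs_of_pos (ht k), inv_mul_le_iff₀ (ht k)]
    exact hxn
  have hlipk : ∀ k, ∀ a ∈ X, ‖a‖ ≤ t k * ε → ∀ b ∈ X, ‖b‖ ≤ t k * ε →
      dist (φk k a) (φk k b) ≤ C * dist a b ∧ dist a b ≤ c * dist (φk k a) (φk k b) := by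
    intro k a ha han b hb hbn
    have hu := hmem k a ha han
    have hv := hmem k b hb hbn
    have hd1 : dist (φk k a) (φk k b)
        = t k * dist (φ ((t k)⁻¹ • a)) (φ ((t k)⁻¹ • b)) := by
      show dist (t k • φ ((t k)⁻¹ • a)) (t k • φ ((t k)⁻¹ • b)) = _
      rw [dist_smul₀, Real.norm_eq_abs, abs_of_pos (ht k)]
    have hd2 : dist ((t k)⁻¹ • a) ((t k)⁻¹ • b) = (t k)⁻¹ * dist a b := by
      rw [dist_smul₀, norm_inv, Real.norm_eq_abs, abs_of_pos (ht k)]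
    constructor
    · rw [hd1]
      calc t k * dist (φ ((t k)⁻¹ • a)) (φ ((t k)⁻¹ • b))
          ≤ t k * (C * dist ((t k)⁻¹ • a) ((t k)⁻¹ • b)) :=
            mul_le_mul_of_nonneg_left (hlip _ hu _ hv) (ht k).le
        _ = C * dist a b := by rw [hd2]; field_simp; exact mul_div_cancel_left₀ _ (htne k)
    · have hle := hlipinv _ hu _ hv
      rw [hd2] at hle
      rw [hd1]
      calc dist a b = t k * ((t k)⁻¹ * dist a b) := by field_simp; exact (mul_div_cancel_right₀ _ (htne k)).symm
        _ ≤ t k * (c * dist (φ ((t k)⁻¹ • a)) (φ ((t k)⁻¹ • b))) :=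
            mul_le_mul_of_nonneg_left hle (ht k).le
        _ = c * (t k * dist (φ ((t k)⁻¹ • a)) (φ ((t k)⁻¹ • b))) := by ring
  have hmemY : ∀ k, ∀ x ∈ X, ‖x‖ ≤ t k * ε → φk k x ∈ Y := by
    intro k x hx hxn
    have hm := hbij.mapsTo (hmem k x hx hxn)
    exact hYcone (t k) (ht k).le _ hm.1
  have hφk0 : ∀ k, φk k 0 = 0 := by
    intro k
    show t k • φ ((t k)⁻¹ • (0 : EuclideanSpace ℝ (Fin n))) = 0
    rw [smul_zero, hφ0, smul_zero]
  have hnormb : ∀ k, ∀ x ∈ X, ‖x‖ ≤ t k * ε → ‖φk k x‖ ≤ C * ‖x‖ := by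
    intro k x hx hxn
    have h := (hlipk k x hx hxn 0 h0X (by rw [norm_zero]; positivity)).1
    rw [hφk0, dist_zero_right, dist_zero_right] at h
    exact h
  have hevdom : ∀ x : EuclideanSpace ℝ (Fin n), ∀ᶠ k in atTop, ‖x‖ ≤ t k * ε :=
    fun x => (htop.atTop_mul_const hε).eventually_ge_atTop ‖x‖
  set U : Ultrafilter ℕ := Ultrafilter.of atTop with hU_def
  have hU : (U : Filter ℕ) ≤ atTop := Ultrafilter.of_le _
  have hex : ∀ x ∈ X, ∃ L, Tendsto (fun k => φk k x) (U : Filter ℕ) (𝓝 L) := by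
    intro x hx
    exact ultra_lim_exists U hU _ (C * ‖x‖)
      ((hevdom x).mono fun k hk => hnormb k x hx hk)
  set Φ : EuclideanSpace ℝ (Fin n) → EuclideanSpace ℝ (Fin m) := fun x =>
    if h : ∃ L, Tendsto (fun k => φk k x) (U : Filter ℕ) (𝓝 L) then h.choose else 0
    with hΦ_def
  have hΦt : ∀ x ∈ X, Tendsto (fun k => φk k x) (U : Filter ℕ) (𝓝 (Φ x)) := by
    intro x hx
    have h := hex x hx
    have hx' : Φ x = h.choose := by simp only [hΦ_def]; exact dif_pos h
    rw [hx']
    exact h.choose_spec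
  have hmaps : Set.MapsTo Φ X Y := by
    intro x hx
    exact hYclosed.mem_of_tendsto (hΦt x hx)
      (((hevdom x).mono fun k hk => hmemY k x hx hk).filter_mono hU)
  have hlipΦ : ∀ a ∈ X, ∀ b ∈ X, dist (Φ a) (Φ b) ≤ C * dist a b := by
    intro a ha b hb
    refine le_of_tendsto ((hΦt a ha).dist (hΦt b hb)) ?_
    refine (((hevdom a).and (hevdom b)).filter_mono hU).mono ?_
    rintro k ⟨hka, hkb⟩
    exact (hlipk k a ha hka b hb hkb).1
  have hlowΦ : ∀ a ∈ X, ∀ b ∈ X, dist a b ≤ c * dist (Φ a) (Φ b) := by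
    intro a ha b hb
    refine ge_of_tendsto (((hΦt a ha).dist (hΦt b hb)).const_mul c) ?_
    refine (((hevdom a).and (hevdom b)).filter_mono hU).mono ?_
    rintro k ⟨hka, hkb⟩
    exact (hlipk k a ha hka b hb hkb).2
  have hinj : Set.InjOn Φ X := by
    intro a ha b hb hab
    have h := hlowΦ a ha b hb
    rw [hab, dist_self, mul_zero] at h
    exact dist_le_zero.mp h
  have hsurj : Set.SurjOn Φ X Y := by
    intro y hy
    set ψ := Function.invFunOn φ {x ∈ X | ‖x‖ ≤ ε} with hψ_def
    have hevy : ∀ᶠ k in atTop, ‖y‖ ≤ t k * δ :=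
      (htop.atTop_mul_const hδ).eventually_ge_atTop ‖y‖
    have hz : ∀ k, ‖y‖ ≤ t k * δ → (t k)⁻¹ • y ∈ {y ∈ Y | ‖y‖ ≤ δ} := by
      intro k hk
      refine ⟨hYcone _ (by positivity) y hy, ?_⟩
      rw [norm_smul, norm_inv, Real.norm_eq_abs, abs_of_pos (ht k), inv_mul_le_iff₀ (ht k)]
      exact hk
    set xk : ℕ → EuclideanSpace ℝ (Fin n) := fun k => t k • ψ ((t k)⁻¹ • y) with hxk_def
    have hxkmem : ∀ k, ‖y‖ ≤ t k * δ → (xk k ∈ X ∧ ‖xk k‖ ≤ c * ‖y‖) := by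
      intro k hk
      have hzk := hz k hk
      have hψm : ψ ((t k)⁻¹ • y) ∈ {x ∈ X | ‖x‖ ≤ ε} := hbij.surjOn.mapsTo_invFunOn hzk
      have hφψ : φ (ψ ((t k)⁻¹ • y)) = (t k)⁻¹ • y := hbij.surjOn.rightInvOn_invFunOn hzk
      refine ⟨hXcone _ (ht k).le _ hψm.1, ?_⟩
      have hnp : ‖ψ ((t k)⁻¹ • y)‖ ≤ c * ‖(t k)⁻¹ • y‖ := by
        have h := hlipinv _ hψm _ h0S
        rw [hφψ, hφ0, dist_zero_right, dist_zero_right] at h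
        exact h
      show ‖t k • ψ ((t k)⁻¹ • y)‖ ≤ c * ‖y‖
      calc ‖t k • ψ ((t k)⁻¹ • y)‖ = t k * ‖ψ ((t k)⁻¹ • y)‖ := by
            rw [norm_smul, Real.norm_eq_abs, abs_of_pos (ht k)]
        _ ≤ t k * (c * ‖(t k)⁻¹ • y‖) := mul_le_mul_of_nonneg_left hnp (ht k).le
        _ = c * ‖y‖ := by
            rw [norm_smul, norm_inv, Real.norm_eq_abs, abs_of_pos (ht k)]
            field_simp
            exact mul_div_cancel_left₀ _ (htne k)
    obtain ⟨L, hLt⟩ := ultra_lim_exists U hU xk (c * ‖y‖)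
      (hevy.mono fun k hk => (hxkmem k hk).2)
    have hLX : L ∈ X := hXclosed.mem_of_tendsto hLt
      ((hevy.mono fun k hk => (hxkmem k hk).1).filter_mono hU)
    refine ⟨L, hLX, ?_⟩
    have h1 : Tendsto (fun k => φk k L) (U : Filter ℕ) (𝓝 (Φ L)) := hΦt L hLX
    have hd0 : Tendsto (fun k => dist (xk k) L) (U : Filter ℕ) (𝓝 0) :=
      tendsto_iff_dist_tendsto_zero.1 hLt
    have hev2 : ∀ᶠ k in atTop, dist (φk k (xk k)) (φk k L) ≤ C * dist (xk k) L := by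
      have hcy : ∀ᶠ k in atTop, c * ‖y‖ ≤ t k * ε :=
        (htop.atTop_mul_const hε).eventually_ge_atTop (c * ‖y‖)
      filter_upwards [hevy, hcy, hevdom L] with k hk1 hk2 hk3
      exact (hlipk k (xk k) (hxkmem k hk1).1 (le_trans (hxkmem k hk1).2 hk2) L hLX hk3).1
    have h2 : Tendsto (fun k => dist (φk k (xk k)) (φk k L)) (U : Filter ℕ) (𝓝 0) := by
      refine squeeze_zero' (Filter.Eventually.of_forall fun k => dist_nonneg)
        (hev2.filter_mono hU) ?_
      simpa using hd0.const_mul C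
    have h3 : Tendsto (fun k => φk k (xk k)) (U : Filter ℕ) (𝓝 (Φ L)) := by
      rw [tendsto_iff_dist_tendsto_zero]
      refine squeeze_zero' (Filter.Eventually.of_forall fun k => dist_nonneg)
        (Filter.Eventually.of_forall fun k => dist_triangle (φk k (xk k)) (φk k L) (Φ L)) ?_
      simpa using h2.add (tendsto_iff_dist_tendsto_zero.1 h1)
    have h4 : ∀ᶠ k in (U : Filter ℕ), φk k (xk k) = y := by
      refine (hevy.mono ?_).filter_mono hU
      intro k hk
      have hzk := hz k hk
      have hφψ : φ (ψ ((t k)⁻¹ • y)) = (t k)⁻¹ • y := hbij.surjOn.rightInvOn_invFunOn hzk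
      show t k • φ ((t k)⁻¹ • (t k • ψ ((t k)⁻¹ • y))) = y
      rw [inv_smul_smul₀ (htne k), hφψ, smul_inv_smul₀ (htne k)]
    have h5 : Tendsto (fun k => φk k (xk k)) (U : Filter ℕ) (𝓝 y) :=
      Tendsto.congr' (h4.mono fun k hk => hk.symm) tendsto_const_nhds
    exact tendsto_nhds_unique h3 h5
  exact ⟨Φ, ⟨hmaps, hinj, hsurj⟩, ⟨C, hC, hlipΦ⟩, ⟨c, hc, hlowΦ⟩⟩
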